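/- Let v ∈ L^n with wt_R(v) = t and 1 ≤ t ≤ n. Then there exists an invertible n×n matrix P with entries in the base field K (viewed in L via the inclusion K ⊆ L) such that the vector w = v·P satisfies: w_j = 0 for every index j > t, and the first t entries of w are linearly independent over K (so the truncation of w to its first t entries has rank weight t). -/

import Mathlib

open Matrix

/-- Rank weight of a vector over the extension `L` of the base field `K`. -/
noncomputable def rankWeight (K : Type*) {L : Type*} [Field K] [Field L] [Algebra K L]
    {ι : Type*} (v : ι → L) : ℕ :=
  Module.finrank K (Submodule.span K (Set.range v))

theorem exists_baseField_change_support_normal_form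
    (q m n t : ℕ)
    (K L : Type*) [Field K] [Fintype K] [Field L] [Algebra K L]
    (hq : Fintype.card K = q) (hm : Module.finrank K L = m)
    (htpos : 1 ≤ t) (htn : t ≤ n)
    (v : Fin n → L) (hv : rankWeight K v = t) :
    ∃ P : Matrix (Fin n) (Fin n) K, IsUnit P ∧
      (∀ j : Fin n, t ≤ (j : ℕ) → (v ᵥ* P.map (algebraMap K L)) j = 0) ∧
      LinearIndependent K
        (fun i : Fin t => (v ᵥ* P.map (algebraMap K L)) (Fin.castLE htn i)) := by
  classical
  -- the K-linear map sending coefficient vectors to linear combinations of v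
  set φ : (Fin n → K) →ₗ[K] L := Fintype.linearCombination K v with hφ
  have hrange : LinearMap.range φ = Submodule.span K (Set.range v) := by
    rw [hφ, Fintype.range_linearCombination]
  have hrk : Module.finrank K (LinearMap.range φ) = t := by
    rw [hrange]; exact hv
  have hkerfin : Module.finrank K (LinearMap.ker φ) = n - t := by
    have := LinearMap.finrank_range_add_finrank_ker φ
    rw [hrk] at this
    simp [Module.finrank_fintype_fun_eq_card] at this
    omega
  obtain ⟨W, hW⟩ := (LinearMap.ker φ).exists_isCompl
  have hWfin : Module.finrank K W = t := by
    have := Submodule.finrank_add_eq_of_isCompl hW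
    simp [Module.finrank_fintype_fun_eq_card, hkerfin] at this
    omega
  let bW : Module.Basis (Fin t) K W := Module.finBasisOfFinrankEq K W hWfin
  let bKer : Module.Basis (Fin (n - t)) K (LinearMap.ker φ) := Module.finBasisOfFinrankEq K _ hkerfin
  let b0 : Module.Basis (Fin t ⊕ Fin (n - t)) K (Fin n → K) :=
    (bW.prod bKer).map (Submodule.prodEquivOfIsCompl W (LinearMap.ker φ) hW.symm)
  let e : Fin t ⊕ Fin (n - t) ≃ Fin n := finSumFinEquiv.trans (finCongr (by omega))
  let b : Module.Basis (Fin n) K (Fin n → K) := b0.reindex e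
  let P : Matrix (Fin n) (Fin n) K := Matrix.of fun i j => b j i
  have hPmat : P = (Pi.basisFun K (Fin n)).toMatrix ⇑b := by
    ext i j
    simp [P, Module.Basis.toMatrix_apply]
  have hPunit : IsUnit P := by
    rw [hPmat]
    have := (Pi.basisFun K (Fin n)).invertibleToMatrix b
    exact isUnit_of_invertible _
  have hw : ∀ j : Fin n, (v ᵥ* P.map (algebraMap K L)) j = φ (b j) := by
    intro j
    simp only [Matrix.vecMul, dotProduct, Matrix.map_apply, hφ,
      Fintype.linearCombination_apply, Algebra.smul_def, P, Matrix.of_apply]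
    exact Finset.sum_congr rfl fun i _ => mul_comm _ _
  have hb0inl : ∀ i : Fin t, b0 (Sum.inl i) = (bW i : Fin n → K) := by
    intro i
    simp [b0, Module.Basis.prod_apply, Submodule.coe_prodEquivOfIsCompl]
  have hb0inr : ∀ i : Fin (n - t), b0 (Sum.inr i) ∈ LinearMap.ker φ := by
    intro i
    have : b0 (Sum.inr i) = (bKer i : Fin n → K) := by
      simp [b0, Module.Basis.prod_apply, Submodule.coe_prodEquivOfIsCompl]
    rw [this]; exact (bKer i).2
  refine ⟨P, hPunit, ?_, ?_⟩
  · intro j hj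
    rw [hw]
    have hb : b j = b0 (e.symm j) := by simp [b]
    rcases hsum : e.symm j with i | i
    · exfalso
      have : e (Sum.inl i) = j := by rw [← hsum]; simp
      have : (j : ℕ) = (i : ℕ) := by
        rw [← this]; simp [e, finSumFinEquiv]
      omega
    · rw [hb, hsum]
      exact hb0inr i
  · have hkey : ∀ i : Fin t, b (Fin.castLE htn i) = (bW i : Fin n → K) := by
      intro i
      have he : e (Sum.inl i) = Fin.castLE htn i := by
        apply Fin.ext
        simp [e, finSumFinEquiv]
      have : e.symm (Fin.castLE htn i) = Sum.inl i := by
        rw [← he]; simp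
      rw [show b (Fin.castLE htn i) = b0 (e.symm (Fin.castLE htn i)) by simp [b], this,
        hb0inl]
    have hli : LinearIndependent K fun i : Fin t => (bW i : Fin n → K) :=
      bW.linearIndependent.map' W.subtype (Submodule.ker_subtype W)
    have hdisj : Disjoint (Submodule.span K (Set.range fun i : Fin t => (bW i : Fin n → K)))
        (LinearMap.ker φ) := by
      refine Disjoint.mono_left ?_ hW.symm.disjoint
      rw [Submodule.span_le]
      rintro x ⟨i, rfl⟩
      exact (bW i).2
    have := hli.map hdisj
    convert this with i
    rw [hw, hkey]
    rfl
    all_goals rfl
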